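/- Let u, v, w be pairwise distinct complex numbers of modulus 1, and for z ∈ ℂ with |z| = 1, z ≠ w and uv ≠ wz define F(z) := ((uv − uw − vw)z + uvw)/(−wz + uv). Then F(z) lies on the line through u and v and on the line through z and w; in particular F(u) = u and F(v) = v. -/

import Mathlib

open Complex

/-- If `a` has modulus 1, its conjugate is its inverse. -/
lemma conj_eq_inv_of_abs_one {a : ℂ} (ha : ‖a‖ = 1) :
    (starRingEnd ℂ) a = a⁻¹ := by
  have h0 : a ≠ 0 := by
    intro h; rw [h] at ha; simp at ha
  have h : a * (starRingEnd ℂ) a = 1 := by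
    rw [Complex.mul_conj, Complex.normSq_eq_norm_sq, ha]; norm_num
  field_simp
  linear_combination h

/-- A complex number lies on the real line through two points if the ratio is self-conjugate. -/
lemma on_line_of_conj_eq {p a b : ℂ} (hab : a ≠ b)
    (h : (starRingEnd ℂ) ((p - a) / (b - a)) = (p - a) / (b - a)) :
    ∃ t : ℝ, p = a + t • (b - a) := by
  set q := (p - a) / (b - a) with hq
  have hba : b - a ≠ 0 := sub_ne_zero.mpr (Ne.symm hab)
  have hre : q = (q.re : ℂ) := (Complex.conj_eq_iff_re.mp h).symm
  refine ⟨q.re, ?_⟩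
  have : p - a = q * (b - a) := by
    rw [hq]; field_simp
  rw [Complex.real_smul, ← hre, ← this]; ring

theorem stmt_11 (u v w : ℂ)
    (hu : ‖u‖ = 1) (hv : ‖v‖ = 1) (hw : ‖w‖ = 1)
    (huv : u ≠ v) (huw : u ≠ w) (hvw : v ≠ w) :
    let F : ℂ → ℂ := fun z => ((u * v - u * w - v * w) * z + u * v * w) / (-(w * z) + u * v)
    (∀ z : ℂ, ‖z‖ = 1 → z ≠ w → u * v ≠ w * z →
      (∃ t : ℝ, F z = u + t • (v - u)) ∧ (∃ t : ℝ, F z = z + t • (w - z))) ∧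
    F u = u ∧ F v = v := by
  intro F
  have hu0 : u ≠ 0 := by intro h; rw [h] at hu; simp at hu
  have hv0 : v ≠ 0 := by intro h; rw [h] at hv; simp at hv
  have hw0 : w ≠ 0 := by intro h; rw [h] at hw; simp at hw
  have Hu : u * u⁻¹ = 1 := mul_inv_cancel₀ hu0
  have Hv : v * v⁻¹ = 1 := mul_inv_cancel₀ hv0
  have Hw : w * w⁻¹ = 1 := mul_inv_cancel₀ hw0
  constructor
  · intro z hz hzw huvwz
    have hz0 : z ≠ 0 := by intro h; rw [h] at hz; simp at hz
    have Hz : z * z⁻¹ = 1 := mul_inv_cancel₀ hz0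
    have hden : -(w * z) + u * v ≠ 0 := by
      intro h; exact huvwz (by linear_combination h)
    have hcden : -(w⁻¹ * z⁻¹) + u⁻¹ * v⁻¹ ≠ 0 := by
      intro h
      apply huvwz
      have h2 : (u * v)⁻¹ = (w * z)⁻¹ := by
        rw [mul_inv, mul_inv]; linear_combination h
      exact inv_injective h2
    have hcF : (starRingEnd ℂ) (F z) = (u + v - w - z) / (-(w * z) + u * v) := by
      simp only [F, map_div₀, map_add, map_mul, map_sub, map_neg,
        conj_eq_inv_of_abs_one hu, conj_eq_inv_of_abs_one hv, conj_eq_inv_of_abs_one hw,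
        conj_eq_inv_of_abs_one hz]
      rw [div_eq_div_iff hcden hden]
      linear_combination (-v⁻¹ + v*v⁻¹*w⁻¹ - v*w⁻¹*z⁻¹ + v*v⁻¹*z⁻¹) * Hu
        + (-u⁻¹ + w⁻¹ - u*w⁻¹*z⁻¹ + z⁻¹) * Hv
        + (-z⁻¹ - z*u⁻¹*v⁻¹ + z*v⁻¹*z⁻¹ + z*u⁻¹*z⁻¹) * Hw
        + (-w⁻¹ + v⁻¹ + u⁻¹ - w*u⁻¹*v⁻¹) * Hz
    constructor
    · apply on_line_of_conj_eq huv
      rw [map_div₀, map_sub, map_sub, hcF, conj_eq_inv_of_abs_one hu, conj_eq_inv_of_abs_one hv]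
      have hvu : v - u ≠ 0 := sub_ne_zero.mpr (Ne.symm huv)
      have hvu' : v⁻¹ - u⁻¹ ≠ 0 :=
        sub_ne_zero.mpr (fun h => huv (inv_injective h).symm)
      simp only [F]
      rw [div_sub' hden, div_sub' hden, div_div, div_div,
        div_eq_div_iff (mul_ne_zero hden hvu') (mul_ne_zero hden hvu)]
      linear_combination (u*v^2*w - v*w^2*z + u*v^2*z - v*w*z^2 - u*v^3 - u*v*w*z
          + v^2*w*z + w^2*z^2) * Hu
        + (u^3*v - u^2*w*z - u^2*v*w + u*w^2*z + u*v*w*z - w^2*z^2 - u^2*v*z + u*w*z^2) * Hv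
    · apply on_line_of_conj_eq hzw
      rw [map_div₀, map_sub, map_sub, hcF, conj_eq_inv_of_abs_one hz, conj_eq_inv_of_abs_one hw]
      have hwz : w - z ≠ 0 := sub_ne_zero.mpr (Ne.symm hzw)
      have hwz' : w⁻¹ - z⁻¹ ≠ 0 :=
        sub_ne_zero.mpr (fun h => hzw (inv_injective h).symm)
      simp only [F]
      rw [div_sub' hden, div_sub' hden, div_div, div_div,
        div_eq_div_iff (mul_ne_zero hden hwz') (mul_ne_zero hden hwz)]
      linear_combination (-(u*v*z^2) + w*z^3 - u^2*v^2 + u*v*w*z + u*v^2*z - v*w*z^2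
          + u^2*v*z - u*w*z^2) * Hw
        + (-(u*v^2*w) + v*w^2*z - u^2*v*w + u*w^2*z + u^2*v^2 - u*v*w*z + u*v*w^2 - w^3*z) * Hz
  · have hden_u : -(w * u) + u * v ≠ 0 := by
      intro h
      have h' : u * (v - w) = 0 := by linear_combination h
      rcases mul_eq_zero.mp h' with h'' | h''
      · exact hu0 h''
      · exact hvw (sub_eq_zero.mp h'')
    have hden_v : -(w * v) + u * v ≠ 0 := by
      intro h
      have h' : v * (u - w) = 0 := by linear_combination h
      rcases mul_eq_zero.mp h' with h'' | h''
      · exact hv0 h''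
      · exact huw (sub_eq_zero.mp h'')
    constructor
    · show ((u * v - u * w - v * w) * u + u * v * w) / (-(w * u) + u * v) = u
      rw [div_eq_iff hden_u]; ring
    · show ((u * v - u * w - v * w) * v + u * v * w) / (-(w * v) + u * v) = v
      rw [div_eq_iff hden_v]; ring
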